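/- Let ρ_d > 0, b > 0, and let α, ω : [0, ∞) → (0, ∞) be continuous, bounded, strictly decreasing functions with limit 0 at infinity. Define b* by b* = b if b = ρ_d, and otherwise b* is the unique positive number with b* ≠ b and b*·exp(−b*/ρ_d) = b·exp(−b/ρ_d). Then there exists a nonzero steady state of the Approximation 4 system, i.e., numbers Ã > 0 and Ω̄ > 0 satisfying ρ_d = α(Ã)·∫₀¹ exp((b − α(Ã))x/ρ_d) dx and Ã = α(Ã)·Ω̄/ω(Ω̄), if and only if α(0) > b*; moreover, when it exists, the pair (Ã, Ω̄) is unique. If α(0) ≤ b*, zero is the unique steady state. -/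

import Mathlib

open Real Set Filter

lemma integral_exp_mul' (c : ℝ) (hc : c ≠ 0) :
    ∫ x in (0:ℝ)..1, Real.exp (c * x) = (Real.exp c - 1) / c := by
  rw [intervalIntegral.integral_comp_mul_left (fun x => Real.exp x) hc]
  simp [integral_exp, Real.exp_zero, smul_eq_mul]
  ring

lemma hasDerivAt_hfun (ρ : ℝ) (a : ℝ) :
    HasDerivAt (fun a : ℝ => a * Real.exp (-a/ρ)) (Real.exp (-a/ρ) * (1 - a/ρ)) a := by
  have h1 : HasDerivAt (fun a : ℝ => -a/ρ) (-1/ρ) a := by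
    simpa using ((hasDerivAt_id a).neg.div_const ρ)
  have h2 : HasDerivAt (fun a : ℝ => Real.exp (-a/ρ)) (Real.exp (-a/ρ) * (-1/ρ)) a :=
    by have := (Real.hasDerivAt_exp (-a/ρ)).comp a h1; exact this
  have h3 : HasDerivAt (fun y : ℝ => y * Real.exp (-y/ρ))
      (1 * Real.exp (-a/ρ) + a * (Real.exp (-a/ρ) * (-1/ρ))) a := (hasDerivAt_id a).mul h2
  convert h3 using 1
  simp
  ring

lemma hfun_strictMonoOn {ρ : ℝ} (hρ : 0 < ρ) :
    StrictMonoOn (fun a : ℝ => a * Real.exp (-a/ρ)) (Icc 0 ρ) := by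
  apply strictMonoOn_of_deriv_pos (convex_Icc 0 ρ)
  · exact (continuous_id.mul (Real.continuous_exp.comp (continuous_id.neg.div_const ρ))).continuousOn
  · intro x hx
    rw [interior_Icc, mem_Ioo] at hx
    rw [(hasDerivAt_hfun ρ x).deriv]
    have : 0 < 1 - x / ρ := by
      have := (div_lt_one hρ).mpr hx.2; linarith
    positivity

lemma hfun_strictAntiOn {ρ : ℝ} (hρ : 0 < ρ) :
    StrictAntiOn (fun a : ℝ => a * Real.exp (-a/ρ)) (Ici ρ) := by
  apply strictAntiOn_of_deriv_neg (convex_Ici ρ)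
  · exact (continuous_id.mul (Real.continuous_exp.comp (continuous_id.neg.div_const ρ))).continuousOn
  · intro x hx
    rw [interior_Ici, mem_Ioi] at hx
    rw [(hasDerivAt_hfun ρ x).deriv]
    have h1 : 1 - x / ρ < 0 := by
      have := (one_lt_div hρ).mpr hx; linarith
    have := Real.exp_pos (-x/ρ)
    nlinarith

lemma hfun_straddle {ρ : ℝ} (hρ : 0 < ρ) {x y : ℝ} (hx : 0 ≤ x) (hy : 0 ≤ y)
    (hxy : x < y) (he : x * Real.exp (-x/ρ) = y * Real.exp (-y/ρ)) :
    x < ρ ∧ ρ < y := by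
  constructor
  · by_contra h
    push_neg at h
    exact absurd he (ne_of_gt (hfun_strictAntiOn hρ h (le_trans h hxy.le) hxy))
  · by_contra h
    push_neg at h
    exact absurd he (ne_of_lt (hfun_strictMonoOn hρ ⟨hx, hxy.le.trans h⟩ ⟨hy, h⟩ hxy))

lemma hval_iff {ρ x y : ℝ} (hρ : 0 < ρ) :
    x * Real.exp (-x/ρ) = y * Real.exp (-y/ρ) ↔ x * Real.exp ((y - x)/ρ) = y := by
  have h1 : Real.exp ((y - x)/ρ) = Real.exp (y/ρ) * Real.exp (-x/ρ) := by
    rw [← Real.exp_add]; ring_nf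
  have h2 : Real.exp (-y/ρ) * Real.exp (y/ρ) = 1 := by
    rw [← Real.exp_add]; ring_nf; exact Real.exp_zero
  have he := Real.exp_pos (y/ρ)
  constructor
  · intro h
    rw [h1]
    calc x * (Real.exp (y/ρ) * Real.exp (-x/ρ)) = (x * Real.exp (-x/ρ)) * Real.exp (y/ρ) := by ring
    _ = (y * Real.exp (-y/ρ)) * Real.exp (y/ρ) := by rw [h]
    _ = y * (Real.exp (-y/ρ) * Real.exp (y/ρ)) := by ring
    _ = y := by rw [h2]; ring
  · intro h
    rw [h1] at h
    have : (x * Real.exp (-x/ρ)) * Real.exp (y/ρ) = (y * Real.exp (-y/ρ)) * Real.exp (y/ρ) := by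
      calc (x * Real.exp (-x/ρ)) * Real.exp (y/ρ) = x * (Real.exp (y/ρ) * Real.exp (-x/ρ)) := by ring
      _ = y := h
      _ = y * (Real.exp (-y/ρ) * Real.exp (y/ρ)) := by rw [h2]; ring
      _ = (y * Real.exp (-y/ρ)) * Real.exp (y/ρ) := by ring
    exact mul_right_cancel₀ (ne_of_gt he) this

lemma key {ρ b : ℝ} (hρ : 0 < ρ) (hb : 0 < b) {bstar : ℝ}
    (hbstar₁ : b = ρ → bstar = b)
    (hbstar₂ : b ≠ ρ → 0 < bstar ∧ bstar ≠ b ∧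
      bstar * Real.exp (-bstar / ρ) = b * Real.exp (-b / ρ))
    {a : ℝ} (ha : 0 < a) :
    ρ = a * ∫ x in (0:ℝ)..1, Real.exp ((b - a) * x / ρ) ↔ a = bstar := by
  have hrw : ∀ x : ℝ, (b - a) * x / ρ = ((b - a)/ρ) * x := fun x => by ring
  simp only [hrw]
  set c := (b - a)/ρ with hc
  have pigeon : ∀ x y z : ℝ, 0 < x → 0 < y → 0 < z → x ≠ y → y ≠ z → x ≠ z →
      x * Real.exp (-x/ρ) = y * Real.exp (-y/ρ) →
      y * Real.exp (-y/ρ) = z * Real.exp (-z/ρ) → False := by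
    intro x y z hx hy hz hxy hyz hxz e1 e2
    have straddle : ∀ u v : ℝ, 0 < u → 0 < v → u ≠ v →
        u * Real.exp (-u/ρ) = v * Real.exp (-v/ρ) →
        (u < ρ ∧ ρ < v) ∨ (v < ρ ∧ ρ < u) := by
      intro u v hu hv huv he
      rcases lt_or_gt_of_ne huv with h | h
      · exact Or.inl (hfun_straddle hρ hu.le hv.le h he)
      · exact Or.inr (hfun_straddle hρ hv.le hu.le h he.symm)
    have s1 := straddle x y hx hy hxy e1
    have s2 := straddle y z hy hz hyz e2
    have s3 := straddle x z hx hz hxz (e1.trans e2)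
    rcases s1 with ⟨h1,h2⟩|⟨h1,h2⟩ <;> rcases s2 with ⟨h3,h4⟩|⟨h3,h4⟩ <;>
      rcases s3 with ⟨h5,h6⟩|⟨h5,h6⟩ <;> linarith
  constructor
  · intro heq
    by_cases hab : a = b
    · have hc0 : c = 0 := by rw [hc, hab]; simp
      rw [hc0] at heq
      simp at heq
      have hbρ : b = ρ := by rw [← hab]; exact heq.symm
      rw [hbstar₁ hbρ]; exact hab
    · have hc0 : c ≠ 0 := by
        rw [hc]; exact div_ne_zero (sub_ne_zero.mpr (Ne.symm hab)) (ne_of_gt hρ)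
      rw [integral_exp_mul' c hc0] at heq
      have hex : a * Real.exp c = b := by
        have h1 : ρ * c = b - a := by rw [hc]; field_simp
        have h2 : ρ * c = a * (Real.exp c - 1) := by
          rw [heq]; field_simp
        nlinarith [h1, h2]
      have hval : a * Real.exp (-a/ρ) = b * Real.exp (-b/ρ) :=
        (hval_iff hρ).mpr hex
      by_cases hbρ : b = ρ
      · exfalso
        subst hbρ
        rcases lt_or_gt_of_ne hab with h | h
        · have := hfun_straddle hρ ha.le hb.le h hval; linarith [this.2]
        · have := hfun_straddle hρ hb.le ha.le h hval.symm; linarith [this.1]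
      · obtain ⟨hbs, hbsb, hbse⟩ := hbstar₂ hbρ
        by_contra habs
        exact pigeon a b bstar ha hb hbs hab (Ne.symm hbsb) habs hval hbse.symm
  · intro heq
    subst heq
    by_cases hbρ : b = ρ
    · have hab : a = b := hbstar₁ hbρ
      have hc0 : c = 0 := by rw [hc, hab]; simp
      rw [hc0]
      simp [hab, hbρ]
    · obtain ⟨hbs, hbsb, hbse⟩ := hbstar₂ hbρ
      have hex : a * Real.exp c = b := (hval_iff hρ).mp hbse
      have hc0 : c ≠ 0 := by
        rw [hc]; exact div_ne_zero (sub_ne_zero.mpr (Ne.symm hbsb)) (ne_of_gt hρ)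
      rw [integral_exp_mul' c hc0]
      have h1 : ρ * c = b - a := by rw [hc]; field_simp
      field_simp
      nlinarith [h1, hex]

/-- A nonzero steady state of the Approximation 4 system, expressed via the reduced
algebraic system for `(Ã, Ω̄)`:
`ρ = α(Ã) ∫₀¹ exp((b − α(Ã)) x / ρ) dx` and `Ã = α(Ã) Ω̄ / ω(Ω̄)`. -/
def IsNonzeroSteadyState4 (ρ b : ℝ) (α ω : ℝ → ℝ) (A Ω : ℝ) : Prop :=
  0 < A ∧ 0 < Ω ∧
  ρ = α A * ∫ x in (0 : ℝ)..1, Real.exp ((b - α A) * x / ρ) ∧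
  A = α A * Ω / ω Ω

/-- Let `ρ > 0`, `b > 0`, and let `α, ω : [0,∞) → (0,∞)` be continuous,
bounded, strictly decreasing functions tending to `0` at infinity.  Let `b*` be defined
by `b* = b` if `b = ρ` and otherwise the unique positive number `b* ≠ b` with
`b* exp(−b*/ρ) = b exp(−b/ρ)`.  Then the Approximation 4 system has a nonzero steady
state iff `α 0 > b*`; when it exists it is unique; and if `α 0 ≤ b*` then zero is the
unique steady state (no nonzero steady state exists). -/
theorem stmt1 (ρ b : ℝ) (hρ : 0 < ρ) (hb : 0 < b) (α ω : ℝ → ℝ)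
    (hαc : ContinuousOn α (Set.Ici 0)) (hωc : ContinuousOn ω (Set.Ici 0))
    (hαpos : ∀ A ∈ Set.Ici (0 : ℝ), 0 < α A)
    (hωpos : ∀ A ∈ Set.Ici (0 : ℝ), 0 < ω A)
    (hαbdd : BddAbove (α '' Set.Ici 0)) (hωbdd : BddAbove (ω '' Set.Ici 0))
    (hαanti : StrictAntiOn α (Set.Ici 0)) (hωanti : StrictAntiOn ω (Set.Ici 0))
    (hαlim : Filter.Tendsto α Filter.atTop (nhds 0))
    (hωlim : Filter.Tendsto ω Filter.atTop (nhds 0))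
    (bstar : ℝ)
    (hbstar₁ : b = ρ → bstar = b)
    (hbstar₂ : b ≠ ρ → 0 < bstar ∧ bstar ≠ b ∧
      bstar * Real.exp (-bstar / ρ) = b * Real.exp (-b / ρ)) :
    ((∃ A Ω : ℝ, IsNonzeroSteadyState4 ρ b α ω A Ω) ↔ α 0 > bstar) ∧
    (∀ A₁ Ω₁ A₂ Ω₂ : ℝ, IsNonzeroSteadyState4 ρ b α ω A₁ Ω₁ →
      IsNonzeroSteadyState4 ρ b α ω A₂ Ω₂ → A₁ = A₂ ∧ Ω₁ = Ω₂) ∧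
    (α 0 ≤ bstar → ¬ ∃ A Ω : ℝ, IsNonzeroSteadyState4 ρ b α ω A Ω) := by
  have hbs_pos : 0 < bstar := by
    by_cases hbρ : b = ρ
    · rw [hbstar₁ hbρ]; exact hb
    · exact (hbstar₂ hbρ).1
  -- characterization: steady state iff α A = bstar and A = bstar * Ω / ω Ω
  have char : ∀ A Ω : ℝ, IsNonzeroSteadyState4 ρ b α ω A Ω ↔
      (0 < A ∧ 0 < Ω ∧ α A = bstar ∧ A = bstar * Ω / ω Ω) := by
    intro A Ω
    constructor
    · rintro ⟨hA, hΩ, h1, h2⟩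
      have hαA : 0 < α A := hαpos A (le_of_lt hA)
      have heq : α A = bstar := (key hρ hb hbstar₁ hbstar₂ hαA).mp h1
      exact ⟨hA, hΩ, heq, by rw [← heq]; exact h2⟩
    · rintro ⟨hA, hΩ, h1, h2⟩
      have hαA : 0 < α A := hαpos A (le_of_lt hA)
      exact ⟨hA, hΩ, (key hρ hb hbstar₁ hbstar₂ hαA).mpr h1, by rw [h1]; exact h2⟩
  -- G(Ω) = Ω / ω Ω strictly increasing
  have Gmono : ∀ x y : ℝ, 0 ≤ x → 0 ≤ y → x < y → x / ω x < y / ω y := by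
    intro x y hx hy hxy
    have hωx : 0 < ω x := hωpos x hx
    have hωy : 0 < ω y := hωpos y hy
    have h1 : ω y < ω x := hωanti hx hy hxy
    rw [div_lt_div_iff₀ hωx hωy]
    nlinarith
  -- existence given α 0 > bstar
  have exist : α 0 > bstar → ∃ A Ω : ℝ, IsNonzeroSteadyState4 ρ b α ω A Ω := by
    intro hgt
    -- find M with α M < bstar
    have hev : ∀ᶠ x in atTop, α x < bstar ∧ (0:ℝ) ≤ x :=
      (hαlim.eventually (Filter.Tendsto.eventually_lt_const hbs_pos tendsto_id)).and
        (eventually_ge_atTop 0)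
    obtain ⟨M, hM1, hM0⟩ := hev.exists
    -- IVT for α on [0, M]
    have hsub : Icc (0:ℝ) M ⊆ Ici 0 := fun x hx => hx.1
    have hivt := intermediate_value_Icc' hM0 (hαc.mono hsub)
    have hmem : bstar ∈ Icc (α M) (α 0) := ⟨hM1.le, hgt.le⟩
    obtain ⟨A, hA, hAeq⟩ := hivt hmem
    have hApos : 0 < A := by
      rcases hA.1.lt_or_eq with h | h
      · exact h
      · exfalso; rw [← h] at hAeq; rw [hAeq] at hgt; exact lt_irrefl _ hgt
    -- find Ω with Ω / ω Ω = A / bstar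
    set t := A / bstar with ht
    have htpos : 0 < t := div_pos hApos hbs_pos
    have hω0 : 0 < ω 0 := hωpos 0 Set.self_mem_Ici
    set M' := t * ω 0 with hM'
    have hM'pos : 0 < M' := mul_pos htpos hω0
    have hG : ContinuousOn (fun Ω : ℝ => Ω / ω Ω) (Icc 0 M') := by
      apply ContinuousOn.div continuousOn_id (hωc.mono (fun x hx => hx.1))
      exact fun x hx => ne_of_gt (hωpos x hx.1)
    have hGM' : t ≤ M' / ω M' := by
      have h1 : ω M' ≤ ω 0 :=
        (hωanti Set.self_mem_Ici hM'pos.le hM'pos).le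
      have hωM' : 0 < ω M' := hωpos M' hM'pos.le
      rw [le_div_iff₀ hωM']
      calc t * ω M' ≤ t * ω 0 := by nlinarith
      _ = M' := rfl
    have hivt2 := intermediate_value_Icc hM'pos.le hG
    have hmem2 : t ∈ Icc ((0:ℝ) / ω 0) (M' / ω M') := by
      constructor
      · rw [zero_div]; exact htpos.le
      · exact hGM'
    obtain ⟨Ω, hΩmem, hΩeq⟩ := hivt2 hmem2
    have hΩpos : 0 < Ω := by
      rcases hΩmem.1.lt_or_eq with h | h
      · exact h
      · exfalso; rw [← h] at hΩeq; simp at hΩeq; rw [hΩeq] at htpos; exact lt_irrefl _ htpos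
    refine ⟨A, Ω, (char A Ω).mpr ⟨hApos, hΩpos, hAeq, ?_⟩⟩
    have hωΩ : 0 < ω Ω := hωpos Ω hΩpos.le
    have : Ω / ω Ω = A / bstar := hΩeq
    field_simp at this ⊢
    linarith [this]
  -- forward: steady state implies α 0 > bstar
  have fwd : (∃ A Ω : ℝ, IsNonzeroSteadyState4 ρ b α ω A Ω) → α 0 > bstar := by
    rintro ⟨A, Ω, hss⟩
    obtain ⟨hA, hΩ, h1, h2⟩ := (char A Ω).mp hss
    rw [← h1]
    exact hαanti Set.self_mem_Ici hA.le hA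
  -- uniqueness
  have uniq : ∀ A₁ Ω₁ A₂ Ω₂ : ℝ, IsNonzeroSteadyState4 ρ b α ω A₁ Ω₁ →
      IsNonzeroSteadyState4 ρ b α ω A₂ Ω₂ → A₁ = A₂ ∧ Ω₁ = Ω₂ := by
    intro A₁ Ω₁ A₂ Ω₂ h₁ h₂
    obtain ⟨hA₁, hΩ₁, e₁, f₁⟩ := (char A₁ Ω₁).mp h₁
    obtain ⟨hA₂, hΩ₂, e₂, f₂⟩ := (char A₂ Ω₂).mp h₂
    have hAeq : A₁ = A₂ :=
      hαanti.injOn hA₁.le hA₂.le (e₁.trans e₂.symm)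
    refine ⟨hAeq, ?_⟩
    have hω₁ : 0 < ω Ω₁ := hωpos Ω₁ hΩ₁.le
    have hω₂ : 0 < ω Ω₂ := hωpos Ω₂ hΩ₂.le
    have hG : Ω₁ / ω Ω₁ = Ω₂ / ω Ω₂ := by
      have : bstar * Ω₁ / ω Ω₁ = bstar * Ω₂ / ω Ω₂ := by
        rw [← f₁, ← f₂, hAeq]
      field_simp at this ⊢
      nlinarith [this, hbs_pos]
    by_contra hne
    rcases lt_or_gt_of_ne hne with h | h
    · exact absurd hG (ne_of_lt (Gmono Ω₁ Ω₂ hΩ₁.le hΩ₂.le h))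
    · exact absurd hG (ne_of_gt (Gmono Ω₂ Ω₁ hΩ₂.le hΩ₁.le h))
  exact ⟨⟨fwd, exist⟩, uniq, fun hle hex => absurd (fwd hex) (not_lt.mpr hle)⟩
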